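/- Let λ : ℕ × ℕ → ℂ, let ε ∈ (0, 1/3) and K₀ ≥ 1, and suppose that for every real n ≥ 1 one has Σ_{n₁,n₂ ≥ 1, n₁²n₂ ≤ n} |λ(n₂,n₁)|² / (n₁²·n₂) ≤ K₀ · n^ε. Then there exists a constant C > 0 (depending only on K₀ and ε) such that for every real α ≥ 7/6, every real N₀ ≥ 2 and every real X ≥ 2, one has Σ_{1 ≤ n₁ ≤ X} n₁^{−α} · ( Σ_{1 ≤ n₂ ≤ N₀/n₁²} |λ(n₂,n₁)|² / n₂^{2/3} )^{1/2} ≤ C · X^{ε} · N₀^{1/6 + ε}. -/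

import Mathlib

open Finset

/-- Harmonic sum bound. -/
lemma n1_harmonic_aux (N : ℕ) : ∑ n ∈ Finset.Icc 1 N, (n:ℝ)⁻¹ ≤ 1 + Real.log N := by
  have := harmonic_le_one_add_log N
  rw [harmonic_eq_sum_Icc] at this
  push_cast at this
  exact this

set_option maxHeartbeats 1600000

/-- The `n₁`-sum lemma: assuming the Ramanujan bound on average for `λ`, the sum
`Σ_{n₁ ≤ X} n₁^{-α} (Σ_{n₂ ≤ N₀/n₁²} |λ(n₂,n₁)|²/n₂^{2/3})^{1/2}` is
`O(X^ε N₀^{1/6+ε})` uniformly for `α ≥ 7/6`. -/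
theorem n1_sum_lemma (lam : ℕ × ℕ → ℂ) (ε : ℝ) (hε : 0 < ε) (hε' : ε < 1 / 3)
    (K₀ : ℝ) (hK₀ : 1 ≤ K₀)
    (hyp : ∀ n : ℝ, 1 ≤ n →
      (∑ n₁ ∈ Finset.Icc 1 ⌊n⌋₊, ∑ n₂ ∈ Finset.Icc 1 ⌊n⌋₊,
        if (n₁ : ℝ) ^ 2 * (n₂ : ℝ) ≤ n then
          ‖lam (n₂, n₁)‖ ^ 2 / ((n₁ : ℝ) ^ 2 * (n₂ : ℝ)) else 0) ≤ K₀ * n ^ ε) :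
    ∃ C : ℝ, 0 < C ∧ ∀ α : ℝ, 7 / 6 ≤ α → ∀ N₀ : ℝ, 2 ≤ N₀ → ∀ X : ℝ, 2 ≤ X →
      (∑ n₁ ∈ Finset.Icc 1 ⌊X⌋₊, (n₁ : ℝ) ^ (-α) *
        Real.sqrt (∑ n₂ ∈ Finset.Icc 1 ⌊N₀ / (n₁ : ℝ) ^ 2⌋₊,
          ‖lam (n₂, n₁)‖ ^ 2 / (n₂ : ℝ) ^ ((2 : ℝ) / 3))) ≤
        C * X ^ ε * N₀ ^ (1 / 6 + ε) := by
  refine ⟨(1 + 1/ε) * K₀, by positivity, ?_⟩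
  intro α hα N₀ hN₀ X hX
  have hX0 : (0:ℝ) < X := by linarith
  have hN0 : (0:ℝ) < N₀ := by linarith
  set C : ℝ := (1 + 1/ε) * K₀ with hC
  have hC1 : 1 ≤ C := by
    have h1 : (1:ℝ) ≤ 1 + 1/ε := by
      have : 0 < 1/ε := by positivity
      linarith
    calc (1:ℝ) = 1 * 1 := by ring
    _ ≤ (1 + 1/ε) * K₀ := mul_le_mul h1 hK₀ (by norm_num) (by linarith)
  set M := ⌊X⌋₊ with hM
  set S : ℕ → ℝ := fun n₁ => ∑ n₂ ∈ Finset.Icc 1 ⌊N₀ / (n₁ : ℝ) ^ 2⌋₊,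
      ‖lam (n₂, n₁)‖ ^ 2 / (n₂ : ℝ) ^ ((2 : ℝ) / 3) with hSdef
  have hS : ∀ n₁, 0 ≤ S n₁ := by
    intro n₁
    apply Finset.sum_nonneg
    intro i _
    positivity
  set f : ℕ → ℝ := fun n₁ => (n₁:ℝ) ^ ((2:ℝ)/3 - α) with hf
  set g : ℕ → ℝ := fun n₁ => (n₁:ℝ) ^ (-(2:ℝ)/3) * Real.sqrt (S n₁) with hg
  -- rewrite the LHS sum as ∑ f*g
  have hrw : ∀ n₁ ∈ Finset.Icc 1 M, (n₁ : ℝ) ^ (-α) * Real.sqrt (S n₁) = f n₁ * g n₁ := by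
    intro n₁ hn₁
    have h1 : 1 ≤ n₁ := (Finset.mem_Icc.mp hn₁).1
    have hpos : (0:ℝ) < (n₁:ℝ) := by exact_mod_cast h1
    rw [hf, hg]
    dsimp only
    have hexp : (2:ℝ)/3 - α + -(2:ℝ)/3 = -α := by ring
    rw [← mul_assoc, ← Real.rpow_add hpos, hexp]
  have hXε1 : (1:ℝ) ≤ X ^ ε := Real.one_le_rpow (by linarith) hε.le
  have hNε1 : (1:ℝ) ≤ N₀ ^ ε := Real.one_le_rpow (by linarith) hε.le
  -- bound on A = ∑ f²
  have hA : ∑ n₁ ∈ Finset.Icc 1 M, f n₁ ^ 2 ≤ (1 + 1/ε) * X ^ ε := by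
    have step1 : ∑ n₁ ∈ Finset.Icc 1 M, f n₁ ^ 2 ≤ ∑ n₁ ∈ Finset.Icc 1 M, (n₁:ℝ)⁻¹ := by
      apply Finset.sum_le_sum
      intro n₁ hn₁
      have h1 : 1 ≤ n₁ := (Finset.mem_Icc.mp hn₁).1
      have h1' : (1:ℝ) ≤ (n₁:ℝ) := by exact_mod_cast h1
      have hpos : (0:ℝ) < (n₁:ℝ) := by linarith
      have e1 : f n₁ ^ 2 = (n₁:ℝ) ^ (2 * ((2:ℝ)/3 - α)) := by
        rw [hf]
        dsimp only
        rw [← Real.rpow_natCast ((n₁:ℝ) ^ ((2:ℝ)/3 - α)) 2, ← Real.rpow_mul hpos.le]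
        congr 1
        push_cast
        ring
      rw [e1, ← Real.rpow_neg_one (n₁:ℝ)]
      exact Real.rpow_le_rpow_of_exponent_le h1' (by linarith)
    have step2 : ∑ n₁ ∈ Finset.Icc 1 M, (n₁:ℝ)⁻¹ ≤ 1 + Real.log M := n1_harmonic_aux M
    have hM1 : 1 ≤ M := Nat.le_floor (by exact_mod_cast (by linarith : (1:ℝ) ≤ X))
    have hMX : (M:ℝ) ≤ X := Nat.floor_le hX0.le
    have hMpos : (0:ℝ) < (M:ℝ) := by exact_mod_cast hM1
    have step3 : Real.log M ≤ Real.log X := Real.log_le_log hMpos hMX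
    have step4 : Real.log X ≤ (1/ε) * X ^ ε := by
      have h := Real.log_le_sub_one_of_pos (Real.rpow_pos_of_pos hX0 ε)
      rw [Real.log_rpow hX0] at h
      calc Real.log X = (ε * Real.log X) / ε := by field_simp
        _ ≤ X ^ ε / ε := by
            apply (div_le_div_iff_of_pos_right hε).mpr
            linarith
        _ = (1/ε) * X ^ ε := by ring
    calc ∑ n₁ ∈ Finset.Icc 1 M, f n₁ ^ 2 ≤ 1 + Real.log M := le_trans step1 step2
      _ ≤ 1 + (1/ε) * X ^ ε := by linarith
      _ ≤ X ^ ε + (1/ε) * X ^ ε := by linarith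
      _ = (1 + 1/ε) * X ^ ε := by ring
  -- bound on B = ∑ g²
  have hXN1 : (1:ℝ) ≤ X * N₀ := by nlinarith
  set T := ⌊X * N₀⌋₊ with hT
  set u : ℕ → ℕ → ℝ := fun n₁ n₂ => N₀ ^ ((1:ℝ)/3) *
      (if (n₁ : ℝ) ^ 2 * (n₂ : ℝ) ≤ X * N₀ then
        ‖lam (n₂, n₁)‖ ^ 2 / ((n₁ : ℝ) ^ 2 * (n₂ : ℝ)) else 0) with hu
  have hu_nonneg : ∀ n₁ n₂, 0 ≤ u n₁ n₂ := by
    intro n₁ n₂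
    rw [hu]
    dsimp only
    apply mul_nonneg (by positivity)
    split
    · positivity
    · exact le_rfl
  have hB : ∑ n₁ ∈ Finset.Icc 1 M, g n₁ ^ 2 ≤ N₀ ^ ((1:ℝ)/3) * (K₀ * (X * N₀) ^ ε) := by
    have inner_le : ∀ n₁ ∈ Finset.Icc 1 M,
        g n₁ ^ 2 ≤ ∑ n₂ ∈ Finset.Icc 1 T, u n₁ n₂ := by
      intro n₁ hn₁
      have h1 : 1 ≤ n₁ := (Finset.mem_Icc.mp hn₁).1
      have h1' : (1:ℝ) ≤ (n₁:ℝ) := by exact_mod_cast h1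
      have hpos : (0:ℝ) < (n₁:ℝ) := by linarith
      have hg2 : g n₁ ^ 2 = (n₁:ℝ) ^ (-(4:ℝ)/3) * S n₁ := by
        rw [hg]
        dsimp only
        rw [mul_pow, Real.sq_sqrt (hS n₁)]
        congr 1
        rw [← Real.rpow_natCast ((n₁:ℝ) ^ (-(2:ℝ)/3)) 2, ← Real.rpow_mul hpos.le]
        congr 1
        push_cast
        ring
      rw [hg2, hSdef]
      dsimp only
      rw [Finset.mul_sum]
      have hsub : Finset.Icc 1 ⌊N₀ / (n₁ : ℝ) ^ 2⌋₊ ⊆ Finset.Icc 1 T := by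
        apply Finset.Icc_subset_Icc le_rfl
        apply Nat.floor_le_floor
        have hn₁sq : (1:ℝ) ≤ (n₁:ℝ)^2 := by nlinarith
        calc N₀ / (n₁:ℝ)^2 ≤ N₀ / 1 := by
              apply div_le_div_of_nonneg_left hN0.le one_pos hn₁sq
          _ = N₀ := div_one N₀
          _ ≤ X * N₀ := by nlinarith
      refine le_trans (Finset.sum_le_sum ?_) (Finset.sum_le_sum_of_subset_of_nonneg hsub
        (fun i _ _ => hu_nonneg n₁ i))
      intro n₂ hn₂
      obtain ⟨hn₂1, hn₂2⟩ := Finset.mem_Icc.mp hn₂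
      have hn₂1' : (1:ℝ) ≤ (n₂:ℝ) := by exact_mod_cast hn₂1
      have hn₂pos : (0:ℝ) < (n₂:ℝ) := by linarith
      have hfloor : (n₂:ℝ) ≤ N₀ / (n₁:ℝ)^2 := by
        calc (n₂:ℝ) ≤ (⌊N₀ / (n₁ : ℝ) ^ 2⌋₊ : ℝ) := by exact_mod_cast hn₂2
          _ ≤ N₀ / (n₁:ℝ)^2 := Nat.floor_le (by positivity)
      have hPn : (n₁:ℝ)^2 * (n₂:ℝ) ≤ N₀ := by
        rw [← le_div_iff₀' (by positivity)]
        exact hfloor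
      set P : ℝ := (n₁:ℝ)^2 * (n₂:ℝ) with hP
      have hP1 : (1:ℝ) ≤ P := by nlinarith
      have hPpos : (0:ℝ) < P := by linarith
      have hcond : P ≤ X * N₀ := le_trans hPn (by nlinarith)
      rw [hu]
      dsimp only
      rw [if_pos hcond]
      -- show n₁^{-4/3} * (c / n₂^{2/3}) ≤ N₀^{1/3} * (c / P)
      have key : (n₁:ℝ) ^ (-(4:ℝ)/3) * ((n₂:ℝ) ^ ((2:ℝ)/3))⁻¹ = P ^ (-(2:ℝ)/3) := by
        rw [hP, Real.mul_rpow (by positivity) hn₂pos.le]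
        congr 1
        · rw [← Real.rpow_natCast (n₁:ℝ) 2, ← Real.rpow_mul hpos.le]
          congr 1
          push_cast
          ring
        · rw [← Real.rpow_neg hn₂pos.le]
          congr 1
          norm_num
      have hPle : P ^ (-(2:ℝ)/3) ≤ N₀ ^ ((1:ℝ)/3) * P⁻¹ := by
        have e : P ^ (-(2:ℝ)/3) = P ^ ((1:ℝ)/3) * P⁻¹ := by
          rw [← Real.rpow_neg_one P, ← Real.rpow_add hPpos]
          norm_num
        rw [e]
        apply mul_le_mul_of_nonneg_right _ (by positivity)
        exact Real.rpow_le_rpow hPpos.le hPn (by norm_num)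
      calc (n₁:ℝ) ^ (-(4:ℝ)/3) * (‖lam (n₂, n₁)‖ ^ 2 / (n₂:ℝ) ^ ((2:ℝ)/3))
          = ‖lam (n₂, n₁)‖ ^ 2 * ((n₁:ℝ) ^ (-(4:ℝ)/3) * ((n₂:ℝ) ^ ((2:ℝ)/3))⁻¹) := by
            rw [div_eq_mul_inv]; ring
        _ = ‖lam (n₂, n₁)‖ ^ 2 * P ^ (-(2:ℝ)/3) := by rw [key]
        _ ≤ ‖lam (n₂, n₁)‖ ^ 2 * (N₀ ^ ((1:ℝ)/3) * P⁻¹) :=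
            mul_le_mul_of_nonneg_left hPle (by positivity)
        _ = N₀ ^ ((1:ℝ)/3) * (‖lam (n₂, n₁)‖ ^ 2 / P) := by
            rw [div_eq_mul_inv]; ring
    have outer_sub : Finset.Icc 1 M ⊆ Finset.Icc 1 T := by
      apply Finset.Icc_subset_Icc le_rfl
      apply Nat.floor_le_floor
      nlinarith
    calc ∑ n₁ ∈ Finset.Icc 1 M, g n₁ ^ 2
        ≤ ∑ n₁ ∈ Finset.Icc 1 M, ∑ n₂ ∈ Finset.Icc 1 T, u n₁ n₂ :=
          Finset.sum_le_sum inner_le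
      _ ≤ ∑ n₁ ∈ Finset.Icc 1 T, ∑ n₂ ∈ Finset.Icc 1 T, u n₁ n₂ :=
          Finset.sum_le_sum_of_subset_of_nonneg outer_sub
            (fun i _ _ => Finset.sum_nonneg (fun j _ => hu_nonneg i j))
      _ = N₀ ^ ((1:ℝ)/3) * ∑ n₁ ∈ Finset.Icc 1 T, ∑ n₂ ∈ Finset.Icc 1 T,
            (if (n₁ : ℝ) ^ 2 * (n₂ : ℝ) ≤ X * N₀ then
              ‖lam (n₂, n₁)‖ ^ 2 / ((n₁ : ℝ) ^ 2 * (n₂ : ℝ)) else 0) := by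
          rw [Finset.mul_sum]
          congr 1
          ext n₁
          rw [Finset.mul_sum]
      _ ≤ N₀ ^ ((1:ℝ)/3) * (K₀ * (X * N₀) ^ ε) :=
          mul_le_mul_of_nonneg_left (hyp (X * N₀) hXN1) (by positivity)
  -- combine
  have hL_nonneg : 0 ≤ ∑ n₁ ∈ Finset.Icc 1 M, (n₁ : ℝ) ^ (-α) * Real.sqrt (S n₁) := by
    apply Finset.sum_nonneg
    intro i _
    have : (0:ℝ) ≤ (i:ℝ) ^ (-α) := Real.rpow_nonneg (Nat.cast_nonneg i) _
    exact mul_nonneg this (Real.sqrt_nonneg _)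
  have hA0 : 0 ≤ ∑ n₁ ∈ Finset.Icc 1 M, f n₁ ^ 2 := Finset.sum_nonneg fun i _ => sq_nonneg _
  have hB0 : 0 ≤ ∑ n₁ ∈ Finset.Icc 1 M, g n₁ ^ 2 := Finset.sum_nonneg fun i _ => sq_nonneg _
  have CS := Finset.sum_mul_sq_le_sq_mul_sq (Finset.Icc 1 M) f g
  have hsq : (∑ n₁ ∈ Finset.Icc 1 M, (n₁ : ℝ) ^ (-α) * Real.sqrt (S n₁)) ^ 2
      ≤ ((1 + 1/ε) * X ^ ε) * (N₀ ^ ((1:ℝ)/3) * (K₀ * (X * N₀) ^ ε)) := by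
    rw [Finset.sum_congr rfl hrw]
    refine le_trans CS ?_
    exact mul_le_mul hA hB hB0 (by positivity)
  have hRHS_nonneg : (0:ℝ) ≤ C * X ^ ε * N₀ ^ (1/6 + ε) := by positivity
  have hsq2 : ((1 + 1/ε) * X ^ ε) * (N₀ ^ ((1:ℝ)/3) * (K₀ * (X * N₀) ^ ε))
      ≤ (C * X ^ ε * N₀ ^ (1/6 + ε)) ^ 2 := by
    have e1 : (X * N₀) ^ ε = X ^ ε * N₀ ^ ε := Real.mul_rpow hX0.le hN0.le
    have e2 : (N₀ ^ ((1:ℝ)/6 + ε)) ^ 2 = N₀ ^ ((1:ℝ)/3) * N₀ ^ ε * N₀ ^ ε := by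
      rw [← Real.rpow_natCast (N₀ ^ ((1:ℝ)/6 + ε)) 2, ← Real.rpow_mul hN0.le,
        ← Real.rpow_add hN0, ← Real.rpow_add hN0]
      congr 1
      push_cast
      ring
    calc ((1 + 1/ε) * X ^ ε) * (N₀ ^ ((1:ℝ)/3) * (K₀ * (X * N₀) ^ ε))
        = C * ((X ^ ε * X ^ ε) * (N₀ ^ ((1:ℝ)/3) * N₀ ^ ε)) := by
          rw [e1, hC]; ring
      _ ≤ (C * C) * ((X ^ ε * X ^ ε) * (N₀ ^ ((1:ℝ)/3) * N₀ ^ ε * N₀ ^ ε)) := by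
          have hCsq : C ≤ C * C := le_mul_of_one_le_left (by linarith) hC1
          have h2 : (X ^ ε * X ^ ε) * (N₀ ^ ((1:ℝ)/3) * N₀ ^ ε)
              ≤ (X ^ ε * X ^ ε) * (N₀ ^ ((1:ℝ)/3) * N₀ ^ ε * N₀ ^ ε) := by
            apply mul_le_mul_of_nonneg_left _ (by positivity)
            exact le_mul_of_one_le_right (by positivity) hNε1
          exact mul_le_mul hCsq h2 (by positivity) (by positivity)
      _ = (C * X ^ ε * N₀ ^ (1/6 + ε)) ^ 2 := by
          rw [mul_pow, mul_pow, e2]; ring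
  calc ∑ n₁ ∈ Finset.Icc 1 M, (n₁ : ℝ) ^ (-α) * Real.sqrt (S n₁)
      = Real.sqrt ((∑ n₁ ∈ Finset.Icc 1 M, (n₁ : ℝ) ^ (-α) * Real.sqrt (S n₁)) ^ 2) :=
        (Real.sqrt_sq hL_nonneg).symm
    _ ≤ Real.sqrt ((C * X ^ ε * N₀ ^ (1/6 + ε)) ^ 2) :=
        Real.sqrt_le_sqrt (le_trans hsq hsq2)
    _ = C * X ^ ε * N₀ ^ (1/6 + ε) := Real.sqrt_sq hRHS_nonneg
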